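/- Fix n ∈ ℕ and real numbers α, γ. For ε > 0 set q = −e^{−ε}, a = −e^{−ε(α+1/2)}, φ = π/2 + √ε·γ. Then as ε → 0⁺ one has a·q^n·cos(φ)/√(1+q) → (−1)^n·γ, and (1−q^n)(1−a²q^{n−1})/(4(1+q)) → n/2 if n is even and (1−q^n)(1−a²q^{n−1})/(4(1+q)) → (n+2α)/2 if n is odd. -/

import Mathlib

open Filter Real

lemma expA (c : ℝ) : Tendsto (fun ε : ℝ => (1 - Real.exp (-(ε*c)))/ε) (nhdsWithin 0 (Set.Ioi 0)) (nhds c) := by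
  have hin : HasDerivAt (fun ε : ℝ => -(ε*c)) (-c) 0 := by
    simpa [Pi.neg_def] using ((hasDerivAt_id (0:ℝ)).mul_const c).neg
  have h : HasDerivAt (fun ε : ℝ => Real.exp (-(ε*c))) (-c) 0 := by
    simpa [Function.comp_def] using (Real.hasDerivAt_exp (-(0*c))).comp 0 hin
  have hs := hasDerivAt_iff_tendsto_slope.mp h
  have hs2 : Tendsto (fun ε : ℝ => (Real.exp (-(ε*c)) - 1)/ε) (nhdsWithin 0 {(0:ℝ)}ᶜ) (nhds (-c)) := by
    refine hs.congr fun ε => ?_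
    simp [slope_def_field]
  have hs3 := hs2.neg
  rw [neg_neg] at hs3
  refine (hs3.mono_left (nhdsWithin_mono _ ?_)).congr fun ε => ?_
  · intro x hx; exact ne_of_gt hx
  · rw [← neg_div, neg_sub]

lemma sinA (c : ℝ) : Tendsto (fun t : ℝ => Real.sin (t*c)/t) (nhdsWithin 0 (Set.Ioi 0)) (nhds c) := by
  have hin : HasDerivAt (fun t : ℝ => t*c) c 0 := by
    simpa using (hasDerivAt_id (0:ℝ)).mul_const c
  have h : HasDerivAt (fun t : ℝ => Real.sin (t*c)) c 0 := by
    simpa [Function.comp_def] using (Real.hasDerivAt_sin (0*c)).comp 0 hin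
  have hs := hasDerivAt_iff_tendsto_slope.mp h
  refine (hs.mono_left (nhdsWithin_mono _ ?_)).congr fun t => ?_
  · intro x hx; exact ne_of_gt hx
  · simp [slope_def_field]

lemma sqrtTendsto : Tendsto Real.sqrt (nhdsWithin 0 (Set.Ioi 0)) (nhdsWithin 0 (Set.Ioi 0)) := by
  apply tendsto_nhdsWithin_of_tendsto_nhds_of_eventually_within
  · simpa using (Real.continuous_sqrt.tendsto 0).mono_left nhdsWithin_le_nhds
  · filter_upwards [self_mem_nhdsWithin] with x hx
    exact Real.sqrt_pos.mpr hx

lemma ratio1 : Tendsto (fun ε : ℝ => ε / (1 - Real.exp (-ε))) (nhdsWithin 0 (Set.Ioi 0)) (nhds 1) := by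
  have := (expA 1).inv₀ one_ne_zero
  simp only [mul_one, inv_div, inv_one] at this
  exact this

lemma qMP_part1 (n : ℕ) (α γ : ℝ) :
    Tendsto (fun ε : ℝ =>
        let q := -Real.exp (-ε);
        let a := -Real.exp (-(ε * (α + 1 / 2)));
        let φ := Real.pi / 2 + Real.sqrt ε * γ;
        a * q ^ n * Real.cos φ / Real.sqrt (1 + q))
      (nhdsWithin 0 (Set.Ioi 0)) (nhds ((-1 : ℝ) ^ n * γ)) := by
  have hsin : Tendsto (fun ε : ℝ => Real.sin (Real.sqrt ε * γ) / Real.sqrt ε)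
      (nhdsWithin 0 (Set.Ioi 0)) (nhds γ) := (sinA γ).comp sqrtTendsto
  have hsq : Tendsto (fun ε : ℝ => Real.sqrt (ε / (1 - Real.exp (-ε))))
      (nhdsWithin 0 (Set.Ioi 0)) (nhds 1) := by
    have := (Real.continuous_sqrt.tendsto 1).comp ratio1
    simpa [Function.comp_def] using this
  have hexp : Tendsto (fun ε : ℝ => Real.exp (-(ε * (α + 1 / 2 + n))))
      (nhdsWithin 0 (Set.Ioi 0)) (nhds 1) := by
    have : Continuous (fun ε : ℝ => Real.exp (-(ε * (α + 1 / 2 + n)))) := by continuity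
    simpa using (this.tendsto 0).mono_left nhdsWithin_le_nhds
  have hF : Tendsto (fun ε : ℝ => (-1:ℝ)^n * (Real.exp (-(ε * (α + 1 / 2 + n))) *
      ((Real.sin (Real.sqrt ε * γ) / Real.sqrt ε) * Real.sqrt (ε / (1 - Real.exp (-ε))))))
      (nhdsWithin 0 (Set.Ioi 0)) (nhds ((-1:ℝ)^n * γ)) := by
    have hc : Tendsto (fun _ : ℝ => ((-1:ℝ)^n)) (nhdsWithin 0 (Set.Ioi 0)) (nhds ((-1:ℝ)^n)) :=
      tendsto_const_nhds
    have := hc.mul (hexp.mul (hsin.mul hsq))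
    simpa using this
  refine hF.congr' ?_
  filter_upwards [self_mem_nhdsWithin] with ε (hε : 0 < ε)
  have he1 : (0:ℝ) < 1 - Real.exp (-ε) := by
    have : Real.exp (-ε) < 1 := Real.exp_lt_one_iff.mpr (by linarith)
    linarith
  have hsε : (0:ℝ) < Real.sqrt ε := Real.sqrt_pos.mpr hε
  simp only []
  have hdiv : Real.sqrt (ε / (1 - Real.exp (-ε))) = Real.sqrt ε / Real.sqrt (1 - Real.exp (-ε)) :=
    Real.sqrt_div hε.le _
  rw [hdiv]
  have hcos : Real.cos (Real.pi / 2 + Real.sqrt ε * γ) = -Real.sin (Real.sqrt ε * γ) := by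
    rw [Real.cos_add, Real.cos_pi_div_two, Real.sin_pi_div_two]; ring
  have hq : (1 : ℝ) + -Real.exp (-ε) = 1 - Real.exp (-ε) := by ring
  rw [hq, hcos]
  have hqn : (-Real.exp (-ε)) ^ n = (-1:ℝ)^n * Real.exp (-(ε*n)) := by
    rw [neg_pow, ← Real.exp_nat_mul]
    ring_nf
  rw [hqn]
  have hee : Real.exp (-(ε * (α + 1 / 2 + n))) = Real.exp (-(ε * (α + 1/2))) * Real.exp (-(ε*n)) := by
    rw [← Real.exp_add]; ring_nf
  rw [hee]
  field_simp

lemma expC (c : ℝ) : Tendsto (fun ε : ℝ => Real.exp (-(ε*c))) (nhdsWithin 0 (Set.Ioi 0)) (nhds 1) := by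
  have : Continuous (fun ε : ℝ => Real.exp (-(ε*c))) := by continuity
  simpa using (this.tendsto 0).mono_left nhdsWithin_le_nhds

lemma qMP_part2 (n : ℕ) (α : ℝ) :
    Tendsto (fun ε : ℝ =>
        let q := -Real.exp (-ε);
        let a := -Real.exp (-(ε * (α + 1 / 2)));
        (1 - q ^ n) * (1 - a ^ 2 * q ^ (n - 1)) / (4 * (1 + q)))
      (nhdsWithin 0 (Set.Ioi 0))
      (nhds (if Even n then (n : ℝ) / 2 else ((n : ℝ) + 2 * α) / 2)) := by
  rcases Nat.eq_zero_or_pos n with hn0 | hn1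
  · subst hn0
    simp only [pow_zero, sub_self, zero_mul, zero_div, if_pos Even.zero,
      Nat.cast_zero]
    norm_num
  have hden : Tendsto (fun ε : ℝ => (1 - Real.exp (-ε))/ε) (nhdsWithin 0 (Set.Ioi 0)) (nhds 1) := by
    have := expA 1; simpa only [mul_one] using this
  have key : ∀ ε : ℝ, 0 < ε →
      ((-Real.exp (-(ε * (α + 1 / 2))))^2 * (-Real.exp (-ε)) ^ (n-1)
        = (-1:ℝ)^(n-1) * Real.exp (-(ε*(n+2*α)))) := by
    intro ε hε
    have hcast : ((n - 1 : ℕ) : ℝ) = (n : ℝ) - 1 := by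
      rw [Nat.cast_sub hn1]; norm_num
    have h2 : (-Real.exp (-(ε * (α + 1 / 2))))^2 = Real.exp (-(ε*(2*α+1))) := by
      rw [neg_sq, sq, ← Real.exp_add]
      congr 1; ring
    have h3 : (-Real.exp (-ε))^(n-1) = (-1:ℝ)^(n-1) * Real.exp (-(ε*((n:ℝ)-1))) := by
      rw [neg_pow, ← Real.exp_nat_mul, hcast]
      congr 2; ring
    rw [h2, h3]
    have : Real.exp (-(ε*(2*α+1))) * Real.exp (-(ε*((n:ℝ)-1)))
        = Real.exp (-(ε*((n:ℝ)+2*α))) := by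
      rw [← Real.exp_add]; congr 1; ring
    calc Real.exp (-(ε*(2*α+1))) * ((-1:ℝ)^(n-1) * Real.exp (-(ε*((n:ℝ)-1))))
        = (-1:ℝ)^(n-1) * (Real.exp (-(ε*(2*α+1))) * Real.exp (-(ε*((n:ℝ)-1)))) := by ring
      _ = (-1:ℝ)^(n-1) * Real.exp (-(ε*((n:ℝ)+2*α))) := by rw [this]
  rcases Nat.even_or_odd n with hev | hod
  · rw [if_pos hev]
    have hodd : Odd (n - 1) := Nat.Even.sub_odd hn1 hev odd_one
    have hF : Tendsto (fun ε : ℝ =>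
        ((1 - Real.exp (-(ε*n)))/ε) / ((1 - Real.exp (-ε))/ε)
          * ((1 + Real.exp (-(ε*(n+2*α))))/4))
        (nhdsWithin 0 (Set.Ioi 0)) (nhds ((n:ℝ)/2)) := by
      have h1 := ((expA n).div hden one_ne_zero).mul
        (((tendsto_const_nhds (α := ℝ) (f := nhdsWithin 0 (Set.Ioi 0)) (x := (1:ℝ))).add (expC (n+2*α))).div_const 4)
      have : (n:ℝ)/1 * ((1+1)/4) = (n:ℝ)/2 := by ring
      rwa [this] at h1
    refine hF.congr' ?_
    filter_upwards [self_mem_nhdsWithin] with ε (hε : 0 < ε)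
    have he1 : (0:ℝ) < 1 - Real.exp (-ε) := by
      have : Real.exp (-ε) < 1 := Real.exp_lt_one_iff.mpr (by linarith); linarith
    simp only []
    have hqn : (-Real.exp (-ε)) ^ n = (-1:ℝ)^n * Real.exp (-(ε*n)) := by
      rw [neg_pow, ← Real.exp_nat_mul]; ring_nf
    rw [hqn, key ε hε, hev.neg_one_pow, hodd.neg_one_pow]
    have hq : (1 : ℝ) + -Real.exp (-ε) = 1 - Real.exp (-ε) := by ring
    rw [hq]
    field_simp
    ring_nf
  · rw [if_neg (Nat.not_even_iff_odd.mpr hod)]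
    have hevn : Even (n - 1) := Nat.Odd.sub_odd hod odd_one
    have hF : Tendsto (fun ε : ℝ =>
        (1 + Real.exp (-(ε*n))) * (((1 - Real.exp (-(ε*(n+2*α))))/ε) / ((1 - Real.exp (-ε))/ε)) / 4)
        (nhdsWithin 0 (Set.Ioi 0)) (nhds (((n:ℝ)+2*α)/2)) := by
      have h1 := (((tendsto_const_nhds (α := ℝ) (f := nhdsWithin 0 (Set.Ioi 0)) (x := (1:ℝ))).add (expC n)).mul
        ((expA (n+2*α)).div hden one_ne_zero)).div_const 4
      have : (1+1) * (((n:ℝ)+2*α)/1) / 4 = ((n:ℝ)+2*α)/2 := by ring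
      rwa [this] at h1
    refine hF.congr' ?_
    filter_upwards [self_mem_nhdsWithin] with ε (hε : 0 < ε)
    have he1 : (0:ℝ) < 1 - Real.exp (-ε) := by
      have : Real.exp (-ε) < 1 := Real.exp_lt_one_iff.mpr (by linarith); linarith
    simp only []
    have hqn : (-Real.exp (-ε)) ^ n = (-1:ℝ)^n * Real.exp (-(ε*n)) := by
      rw [neg_pow, ← Real.exp_nat_mul]; ring_nf
    rw [hqn, key ε hε, hod.neg_one_pow, hevn.neg_one_pow]
    have hq : (1 : ℝ) + -Real.exp (-ε) = 1 - Real.exp (-ε) := by ring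
    rw [hq]
    field_simp
    ring_nf


/-- the `q → -1` limit (`q = -e^{-ε}`, `a = -e^{-ε(α+1/2)}`,
`φ = π/2 + √ε·γ`, variable rescaled by `√(1+q)`) of the monic `q`-Meixner–Pollaczek
recurrence coefficients yields the recurrence coefficients of the monic
`-1` Meixner–Pollaczek polynomials `Mₙ(x;α,γ)`. -/
theorem qMeixnerPollaczek_to_M1MeixnerPollaczek_limit (n : ℕ) (α γ : ℝ) :
    Tendsto (fun ε : ℝ =>
        let q := -Real.exp (-ε);
        let a := -Real.exp (-(ε * (α + 1 / 2)));
        let φ := Real.pi / 2 + Real.sqrt ε * γ;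
        a * q ^ n * Real.cos φ / Real.sqrt (1 + q))
      (nhdsWithin 0 (Set.Ioi 0)) (nhds ((-1 : ℝ) ^ n * γ)) ∧
    Tendsto (fun ε : ℝ =>
        let q := -Real.exp (-ε);
        let a := -Real.exp (-(ε * (α + 1 / 2)));
        (1 - q ^ n) * (1 - a ^ 2 * q ^ (n - 1)) / (4 * (1 + q)))
      (nhdsWithin 0 (Set.Ioi 0))
      (nhds (if Even n then (n : ℝ) / 2 else ((n : ℝ) + 2 * α) / 2)) :=
  ⟨qMP_part1 n α γ, qMP_part2 n α⟩
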